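/- An endomorphism φ of a k-vector space V is finite potent if and only if V admits a φ-invariant direct sum decomposition V = W ⊕ U such that W is finite-dimensional, φ|_W : W → W is an isomorphism, and φ|_U is nilpotent (locally: equivalently the restriction to U is nilpotent as an operator, i.e. some power of φ vanishes on U). -/

import Mathlib

/-- An endomorphism is finite potent if some power has finite-dimensional range. -/
def IsFinitePotent {k V : Type*} [Field k] [AddCommGroup V] [Module k V]
    (φ : V →ₗ[k] V) : Prop :=
  ∃ n : ℕ, FiniteDimensional k (LinearMap.range (φ ^ n))

/-- `c` is a value of Tate's trace of `φ`: the ordinary trace of the restriction of `φ` to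
any finite-dimensional `φ`-invariant subspace `W` with `φⁿ V ⊆ W` for some `n` equals `c`. -/
def TateTraceSpec {k V : Type*} [Field k] [AddCommGroup V] [Module k V]
    (φ : V →ₗ[k] V) (c : k) : Prop :=
  ∀ (W : Submodule k V) (hW : ∀ x ∈ W, φ x ∈ W), FiniteDimensional k W →
    (∃ n : ℕ, LinearMap.range (φ ^ n) ≤ W) →
    LinearMap.trace k W (φ.restrict hW) = c

open Classical in
/-- Tate's trace of a finite potent endomorphism. -/
noncomputable def tateTrace {k V : Type*} [Field k] [AddCommGroup V] [Module k V]
    (φ : V →ₗ[k] V) : k :=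
  if h : ∃ c, TateTraceSpec φ c then h.choose else 0

theorem isFinitePotent_iff_invariant_decomposition
    {k V : Type*} [Field k] [AddCommGroup V] [Module k V] (φ : V →ₗ[k] V) :
    IsFinitePotent φ ↔
      ∃ (W U : Submodule k V) (hW : ∀ x ∈ W, φ x ∈ W),
        IsCompl W U ∧ FiniteDimensional k W ∧ (∀ x ∈ U, φ x ∈ U) ∧
        Function.Bijective (φ.restrict hW) ∧ (∃ n : ℕ, ∀ u ∈ U, (φ ^ n) u = 0) := by
  constructor
  · rintro ⟨n, hn⟩
    -- ranges of powers are decreasing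
    have hmono : ∀ a b : ℕ, a ≤ b → LinearMap.range (φ ^ b) ≤ LinearMap.range (φ ^ a) := by
      intro a b hab
      obtain ⟨c, rfl⟩ := Nat.exists_eq_add_of_le hab
      rw [pow_add]
      rintro _ ⟨y, rfl⟩
      exact ⟨(φ ^ c) y, by rw [Module.End.mul_apply]⟩
    have hfd : ∀ m : ℕ, FiniteDimensional k (LinearMap.range (φ ^ (n + m))) := fun m =>
      Submodule.finiteDimensional_of_le (hmono n (n + m) (Nat.le_add_right n m))
    -- find a stabilization point using the minimum of the (finite) ranks
    have hrangesucc : ∀ a : ℕ, LinearMap.range (φ ^ (a + 1)) =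
        Submodule.map φ (LinearMap.range (φ ^ a)) := by
      intro a
      rw [pow_succ', Module.End.mul_eq_comp, LinearMap.range_comp]
    set d : ℕ → ℕ := fun m =>
      @Module.finrank k (LinearMap.range (φ ^ (n + m))) _ _ _ with hd
    have hdle : ∀ a b : ℕ, a ≤ b → d b ≤ d a := by
      intro a b hab
      haveI := hfd a
      exact Submodule.finrank_mono (hmono (n + a) (n + b) (by omega))
    obtain ⟨m, hm⟩ : ∃ m, d m = sInf (Set.range d) := by
      have : sInf (Set.range d) ∈ Set.range d := Nat.sInf_mem ⟨d 0, 0, rfl⟩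
      obtain ⟨m, hm⟩ := this
      exact ⟨m, hm⟩
    set N := n + m with hN
    haveI : FiniteDimensional k (LinearMap.range (φ ^ N)) := hfd m
    have hstab : LinearMap.range (φ ^ (N + 1)) = LinearMap.range (φ ^ N) := by
      have h1 : LinearMap.range (φ ^ (N + 1)) ≤ LinearMap.range (φ ^ N) :=
        hmono N (N + 1) (Nat.le_succ N)
      have h2 : d m ≤ d (m + 1) := hm ▸ Nat.sInf_le ⟨m + 1, rfl⟩
      have h3 : n + (m + 1) = N + 1 := by omega
      apply Submodule.eq_of_le_of_finrank_le h1
      simp only [hd] at h2; rw [h3, ← hN] at h2; exact h2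
    have hall : ∀ a : ℕ, N ≤ a → LinearMap.range (φ ^ a) = LinearMap.range (φ ^ N) := by
      intro a ha
      obtain ⟨c, rfl⟩ := Nat.exists_eq_add_of_le ha
      induction c with
      | zero => rfl
      | succ c ih =>
        have : N + (c + 1) = (N + c) + 1 := by omega
        rw [this, hrangesucc, ih (Nat.le_add_right N c), ← hrangesucc, hstab]
    set W := LinearMap.range (φ ^ N) with hWdef
    set U := LinearMap.ker (φ ^ N) with hUdef
    have hW : ∀ x ∈ W, φ x ∈ W := by
      rintro _ ⟨y, rfl⟩
      have : φ ((φ ^ N) y) = (φ ^ (N + 1)) y := by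
        rw [pow_succ', Module.End.mul_apply]
      rw [this]
      exact (hall (N + 1) (Nat.le_succ N)) ▸ LinearMap.mem_range_self _ y
    have hU : ∀ x ∈ U, φ x ∈ U := by
      intro x hx
      have hx0 : (φ ^ N) x = 0 := hx
      show (φ ^ N) (φ x) = 0
      have : (φ ^ N) (φ x) = φ ((φ ^ N) x) := by
        rw [← Module.End.mul_apply, ← pow_succ, pow_succ', Module.End.mul_apply]
      rw [this, hx0, map_zero]
    haveI hWfin : FiniteDimensional k W := hfd m
    have hsurj : Function.Surjective (φ.restrict hW) := by
      rintro ⟨x, hx⟩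
      have hx' : x ∈ LinearMap.range (φ ^ (N + 1)) := hstab.symm ▸ hx
      obtain ⟨y, hy⟩ := hx'
      refine ⟨⟨(φ ^ N) y, LinearMap.mem_range_self _ y⟩, ?_⟩
      apply Subtype.ext
      show φ ((φ ^ N) y) = x
      rw [← Module.End.mul_apply, ← pow_succ']
      exact hy
    have hbij : Function.Bijective (φ.restrict hW) :=
      ⟨LinearMap.injective_iff_surjective.mpr hsurj, hsurj⟩
    have hdisj : Disjoint W U := by
      rw [Submodule.disjoint_def]
      intro x hxW hxU
      have hinj : Function.Injective ((φ.restrict hW) ^ N) := by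
        rw [Module.End.coe_pow]
        exact Function.Injective.iterate hbij.1 N
      have h0 : ((φ.restrict hW) ^ N) ⟨x, hxW⟩ = 0 := by
        rw [Module.End.pow_restrict]
        apply Subtype.ext
        show (φ ^ N) x = 0
        exact hxU
      have := hinj (h0.trans (map_zero _).symm)
      exact congrArg Subtype.val this
    have hcodisj : W ⊔ U = ⊤ := by
      rw [Submodule.eq_top_iff']
      intro v
      have h2N : LinearMap.range (φ ^ (N + N)) = W := hall (N + N) (Nat.le_add_right N N)
      have : (φ ^ N) v ∈ LinearMap.range (φ ^ (N + N)) := by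
        rw [h2N]; exact LinearMap.mem_range_self _ v
      obtain ⟨w, hw⟩ := this
      refine Submodule.mem_sup.mpr ⟨(φ ^ N) w, LinearMap.mem_range_self _ w,
        v - (φ ^ N) w, ?_, by abel⟩
      show (φ ^ N) (v - (φ ^ N) w) = 0
      rw [map_sub, ← Module.End.mul_apply, ← pow_add, hw, sub_self]
    exact ⟨W, U, hW, ⟨hdisj, codisjoint_iff.mpr hcodisj⟩, hWfin, hU, hbij,
      ⟨N, fun u hu => hu⟩⟩
  · rintro ⟨W, U, hW, hcompl, hfin, hU, hbij, n, hn⟩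
    refine ⟨n, ?_⟩
    have hle : LinearMap.range (φ ^ n) ≤ W := by
      rintro _ ⟨v, rfl⟩
      have hv : v ∈ W ⊔ U := by rw [hcompl.sup_eq_top]; trivial
      obtain ⟨w, hw, u, hu, rfl⟩ := Submodule.mem_sup.mp hv
      rw [map_add, hn u hu, add_zero]
      exact Module.End.pow_apply_mem_of_forall_mem n hW w hw
    exact Submodule.finiteDimensional_of_le hle
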